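/- Let B be a faithful section of a base of B(H)^+ and define O_B = {x ∈ B_h(H) : x = x₁ − x₂, x₁,x₂ ≥ 0, x₁ + x₂ ∈ B}. Then O_B = {x ∈ B_h(H) : ∃ b ∈ B with −b ≤ x ≤ b}, and the intersection O_B ∩ span(B) is exactly the unit ball of the base norm ‖·‖_B on span(B). -/

import Mathlib

open Matrix ComplexOrder

variable {n : ℕ}

def Sb (b : Matrix (Fin n) (Fin n) ℂ) : Set (Matrix (Fin n) (Fin n) ℂ) :=
  {a | a.PosSemidef ∧ (a * b).trace = 1}

def IsSection (B : Set (Matrix (Fin n) (Fin n) ℂ)) : Prop :=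
  ∃ (L : Submodule ℝ (Matrix (Fin n) (Fin n) ℂ)) (b : Matrix (Fin n) (Fin n) ℂ),
    b.PosDef ∧ B = (L : Set (Matrix (Fin n) (Fin n) ℂ)) ∩ Sb b

def IsFaithfulSection (B : Set (Matrix (Fin n) (Fin n) ℂ)) : Prop :=
  IsSection B ∧ ∃ b ∈ B, b.PosDef

/-- `O_B = {x = x₁ - x₂ : x₁, x₂ ≥ 0, x₁ + x₂ ∈ B}`. -/
def OB (B : Set (Matrix (Fin n) (Fin n) ℂ)) : Set (Matrix (Fin n) (Fin n) ℂ) :=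
  {x | ∃ x₁ x₂ : Matrix (Fin n) (Fin n) ℂ,
    x₁.PosSemidef ∧ x₂.PosSemidef ∧ x₁ + x₂ ∈ B ∧ x = x₁ - x₂}

/-- The base norm on `span(B)`. -/
noncomputable def baseNormM (B : Set (Matrix (Fin n) (Fin n) ℂ))
    (x : Matrix (Fin n) (Fin n) ℂ) : ℝ :=
  sInf {r | ∃ s t : ℝ, ∃ b₁ ∈ B, ∃ b₂ ∈ B, 0 ≤ s ∧ 0 ≤ t ∧ x = s • b₁ - t • b₂ ∧ r = s + t}

/-! ### Auxiliary lemmas -/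

open scoped MatrixOrder in
noncomputable def Matrix.PosSemidef.sqrt {H : Matrix (Fin n) (Fin n) ℂ} (_hH : H.PosSemidef) :
    Matrix (Fin n) (Fin n) ℂ := CFC.sqrt H

open scoped MatrixOrder in
lemma Matrix.PosSemidef.sqrt_mul_self {H : Matrix (Fin n) (Fin n) ℂ} (hH : H.PosSemidef) :
    hH.sqrt * hH.sqrt = H := CFC.sqrt_mul_sqrt_self H hH.nonneg

open scoped MatrixOrder in
lemma Matrix.PosSemidef.posSemidef_sqrt {H : Matrix (Fin n) (Fin n) ℂ} (hH : H.PosSemidef) :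
    hH.sqrt.PosSemidef := (CFC.sqrt_nonneg H).posSemidef

open scoped MatrixOrder in
lemma aux_exists_conjTranspose_mul_self {M : Matrix (Fin n) (Fin n) ℂ} (hM : M.PosSemidef) :
    ∃ C : Matrix (Fin n) (Fin n) ℂ, M = Cᴴ * C := by
  obtain ⟨C, hC⟩ := CStarAlgebra.nonneg_iff_eq_star_mul_self.mp hM.nonneg
  exact ⟨C, hC⟩

section Aux

attribute [local instance] Matrix.normedAddCommGroup Matrix.normedSpace

lemma aux_rsmul (r : ℝ) (M : Matrix (Fin n) (Fin n) ℂ) : r • M = (r : ℂ) • M := by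
  ext i j; simp [Matrix.smul_apply, Complex.real_smul]

lemma aux_psd_smul {M : Matrix (Fin n) (Fin n) ℂ} (hM : M.PosSemidef) {r : ℝ} (hr : 0 ≤ r) :
    (r • M).PosSemidef := by
  refine Matrix.PosSemidef.of_dotProduct_mulVec_nonneg ?_ ?_
  · have := hM.1
    unfold Matrix.IsHermitian at *
    rw [conjTranspose_smul]
    simp [this]
  · intro x
    have h0 : (r • M) *ᵥ x = r • (M *ᵥ x) := by
      ext i
      simp [Matrix.mulVec, Matrix.smul_apply, dotProduct, Finset.smul_sum, smul_mul_assoc,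
        mul_assoc]
    rw [h0]
    have : star x ⬝ᵥ (r • (M *ᵥ x)) = (r : ℂ) * (star x ⬝ᵥ (M *ᵥ x)) := by
      simp [dotProduct, Finset.mul_sum, Complex.real_smul]
      exact Finset.sum_congr rfl fun i _ => by ring
    rw [this]
    exact mul_nonneg (by exact_mod_cast Complex.zero_le_real.2 hr) (hM.dotProduct_mulVec_nonneg x)

lemma aux_psd_diag {M : Matrix (Fin n) (Fin n) ℂ} (hM : M.PosSemidef) (i : Fin n) :
    0 ≤ M i i := by
  have := hM.dotProduct_mulVec_nonneg (Pi.single i 1)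
  simpa [dotProduct, Matrix.mulVec, Pi.single_apply] using this

lemma aux_psd_trace_nonneg {M : Matrix (Fin n) (Fin n) ℂ} (hM : M.PosSemidef) :
    0 ≤ M.trace :=
  Finset.sum_nonneg fun i _ => aux_psd_diag hM i

lemma aux_nonneg_c (z : ℂ) (h : 0 ≤ z) : z = (z.re : ℂ) ∧ 0 ≤ z.re := by
  rw [Complex.le_def] at h
  exact ⟨(Complex.ext_iff).2 ⟨by simp, by simp [← h.2]⟩, by simpa using h.1⟩

lemma aux_trace_shuffle {A H : Matrix (Fin n) (Fin n) ℂ} (hH : H.PosSemidef) :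
    (A * H).trace = (hH.sqrt * A * hH.sqrt).trace := by
  conv_lhs => rw [← hH.sqrt_mul_self]
  rw [← Matrix.mul_assoc, trace_mul_comm, ← Matrix.mul_assoc]

lemma aux_sandwich_psd {A H : Matrix (Fin n) (Fin n) ℂ} (hA : A.PosSemidef)
    (hH : H.PosSemidef) : (hH.sqrt * A * hH.sqrt).PosSemidef := by
  have := hA.conjTranspose_mul_mul_same hH.sqrt
  rwa [hH.posSemidef_sqrt.1.eq] at this

lemma aux_trace_psd_mul_nonneg {A H : Matrix (Fin n) (Fin n) ℂ} (hA : A.PosSemidef)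
    (hH : H.PosSemidef) : 0 ≤ (A * H).trace := by
  rw [aux_trace_shuffle hH]
  exact aux_psd_trace_nonneg (aux_sandwich_psd hA hH)

lemma aux_psd_trace_zero {M : Matrix (Fin n) (Fin n) ℂ} (hM : M.PosSemidef)
    (h : M.trace = 0) : M = 0 := by
  obtain ⟨C, rfl⟩ := aux_exists_conjTranspose_mul_self hM
  have h1 : (Cᴴ * C).trace = ((∑ j, ∑ i, Complex.normSq (C i j) : ℝ) : ℂ) := by
    push_cast
    simp [Matrix.trace, Matrix.mul_apply, Matrix.diag, conjTranspose_apply,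
      Complex.normSq_eq_conj_mul_self]
  rw [h1, Complex.ofReal_eq_zero] at h
  have h2 := (Finset.sum_eq_zero_iff_of_nonneg (fun j _ =>
      Finset.sum_nonneg fun i _ => Complex.normSq_nonneg _)).1 h
  have : C = 0 := by
    ext i j
    have := (Finset.sum_eq_zero_iff_of_nonneg (fun i _ => Complex.normSq_nonneg _)).1
      (h2 j (Finset.mem_univ _)) i (Finset.mem_univ _)
    exact Complex.normSq_eq_zero.mp this
  simp [this]

lemma aux_sqrt_det_unit {g : Matrix (Fin n) (Fin n) ℂ} (hg : g.PosDef) :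
    IsUnit (hg.posSemidef.sqrt).det := by
  have h : hg.posSemidef.sqrt.det * hg.posSemidef.sqrt.det = g.det := by
    rw [← Matrix.det_mul, hg.posSemidef.sqrt_mul_self]
  have : g.det ≠ 0 := ne_of_gt hg.det_pos
  exact isUnit_iff_ne_zero.2 fun h0 => this (by rw [← h, h0, mul_zero])

lemma aux_psd_trace_mul_posdef_zero {a g : Matrix (Fin n) (Fin n) ℂ} (ha : a.PosSemidef)
    (hg : g.PosDef) (h : (a * g).trace = 0) : a = 0 := by
  set s := hg.posSemidef.sqrt with hs
  have h2 : (s * a * s).PosSemidef := aux_sandwich_psd ha hg.posSemidef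
  have h3 : s * a * s = 0 := aux_psd_trace_zero h2 (by
    rw [← aux_trace_shuffle hg.posSemidef, h])
  have hu := aux_sqrt_det_unit hg
  have h4 : s⁻¹ * (s * a * s) * s⁻¹ = a := by
    rw [← Matrix.mul_assoc, ← Matrix.mul_assoc, Matrix.nonsing_inv_mul _ hu, Matrix.one_mul,
      Matrix.mul_assoc, Matrix.mul_nonsing_inv _ hu, Matrix.mul_one]
  rw [← h4, h3]
  simp

lemma aux_posdef_gap {g : Matrix (Fin n) (Fin n) ℂ} (hg : g.PosDef) (hn : 0 < n) :
    ∃ ε : ℝ, 0 < ε ∧ (g - (ε : ℂ) • 1).PosSemidef := by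
  have hne : (Finset.univ : Finset (Fin n)).Nonempty := by
    simpa [Finset.univ_nonempty_iff] using Fin.pos_iff_nonempty.mp hn
  set ε := Finset.univ.inf' hne hg.1.eigenvalues with hε
  have hεpos : 0 < ε := by
    obtain ⟨i, _, hi⟩ := Finset.exists_mem_eq_inf' hne hg.1.eigenvalues
    rw [hε, hi]
    exact hg.eigenvalues_pos i
  refine ⟨ε, hεpos, ?_⟩
  have hU := (Matrix.mem_unitaryGroup_iff).mp (hg.1.eigenvectorUnitary).2
  have key : g - (ε : ℂ) • 1 =
      (hg.1.eigenvectorUnitary : Matrix (Fin n) (Fin n) ℂ) *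
        diagonal (fun i => ((hg.1.eigenvalues i - ε : ℝ) : ℂ)) *
        (hg.1.eigenvectorUnitary : Matrix (Fin n) (Fin n) ℂ)ᴴ := by
    have hsp := hg.1.spectral_theorem
    rw [Unitary.conjStarAlgAut_apply] at hsp
    have h1 : (ε : ℂ) • (1 : Matrix (Fin n) (Fin n) ℂ) =
        (hg.1.eigenvectorUnitary : Matrix (Fin n) (Fin n) ℂ) *
          ((ε : ℂ) • (1 : Matrix (Fin n) (Fin n) ℂ)) *
          (hg.1.eigenvectorUnitary : Matrix (Fin n) (Fin n) ℂ)ᴴ := by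
      rw [Matrix.mul_smul, Matrix.mul_one, Matrix.smul_mul, ← Matrix.star_eq_conjTranspose, hU]
    have hd : diagonal (fun i => ((hg.1.eigenvalues i - ε : ℝ) : ℂ)) =
        diagonal (RCLike.ofReal ∘ hg.1.eigenvalues) - (ε : ℂ) • 1 := by
      ext i j
      rcases eq_or_ne i j with rfl | hij
      · simp [Matrix.diagonal_apply_eq, Matrix.smul_apply]
      · simp [Matrix.diagonal_apply_ne _ hij, Matrix.one_apply_ne hij, Matrix.smul_apply]
    rw [hd, Matrix.mul_sub, Matrix.sub_mul, ← Matrix.star_eq_conjTranspose, ← hsp,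
      Matrix.star_eq_conjTranspose, ← h1]
  rw [key]
  refine Matrix.PosSemidef.mul_mul_conjTranspose_same ?_ _
  exact Matrix.PosSemidef.diagonal fun i =>
    Complex.zero_le_real.2 (sub_nonneg.2 (Finset.inf'_le _ (Finset.mem_univ i)))

lemma aux_psd_entry_bound {a : Matrix (Fin n) (Fin n) ℂ} (ha : a.PosSemidef) (i j : Fin n) :
    ‖a i j‖ ≤ a.trace.re := by
  have hdre : ∀ k, 0 ≤ (a k k).re := fun k => (aux_nonneg_c _ (aux_psd_diag ha k)).2
  have htr : ∀ k, (a k k).re ≤ a.trace.re := by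
    intro k
    have h0 : a.trace = ∑ l, a l l := rfl
    rw [h0, Complex.re_sum]
    exact Finset.single_le_sum (f := fun l => (a l l).re) (fun l _ => hdre l) (Finset.mem_univ k)
  obtain ⟨C, hC⟩ := aux_exists_conjTranspose_mul_self ha
  set w : Fin n → EuclideanSpace ℂ (Fin n) := fun k => WithLp.toLp 2 (fun l => C l k) with hw
  have hinner : ∀ k m : Fin n, (inner ℂ (w k) (w m) : ℂ) = a k m := by
    intro k m
    simp [hw, PiLp.inner_apply, RCLike.inner_apply, hC, Matrix.mul_apply, conjTranspose_apply]
    exact Finset.sum_congr rfl fun _ _ => mul_comm _ _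
  have hbound : ‖a i j‖ ≤ ‖w i‖ * ‖w j‖ := by
    rw [← hinner i j]; exact norm_inner_le_norm _ _
  have hnorm : ∀ k, ‖w k‖ = Real.sqrt ((a k k).re) := by
    intro k
    have h1 : ‖w k‖ ^ 2 = (a k k).re := by
      have := @inner_self_eq_norm_sq ℂ _ _ _ _ (w k)
      rw [← this, hinner k k]
      rfl
    rw [← h1, Real.sqrt_sq (norm_nonneg _)]
  refine hbound.trans ?_
  rw [hnorm i, hnorm j]
  calc Real.sqrt ((a i i).re) * Real.sqrt ((a j j).re)
      ≤ Real.sqrt (a.trace.re) * Real.sqrt (a.trace.re) :=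
        mul_le_mul (Real.sqrt_le_sqrt (htr i)) (Real.sqrt_le_sqrt (htr j))
          (Real.sqrt_nonneg _) (Real.sqrt_nonneg _)
    _ = a.trace.re := Real.mul_self_sqrt ((hdre i).trans (htr i))

lemma aux_isClosed_psd : IsClosed {A : Matrix (Fin n) (Fin n) ℂ | A.PosSemidef} := by
  have h1 : {A : Matrix (Fin n) (Fin n) ℂ | A.PosSemidef} =
      {A | Aᴴ = A} ∩ ⋂ v : Fin n → ℂ, {A | 0 ≤ star v ⬝ᵥ (A *ᵥ v)} := by
    ext A
    simp only [Set.mem_setOf_eq, Set.mem_inter_iff, Set.mem_iInter]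
    rw [posSemidef_iff_dotProduct_mulVec]
    exact ⟨fun h => ⟨h.1, h.2⟩, fun h => ⟨h.1, h.2⟩⟩
  rw [h1]
  refine IsClosed.inter (isClosed_eq ?_ continuous_id) (isClosed_iInter fun v => ?_)
  · exact Continuous.matrix_conjTranspose continuous_id
  · have hc : Continuous fun A : Matrix (Fin n) (Fin n) ℂ => star v ⬝ᵥ (A *ᵥ v) := by
      have h0 : (fun A : Matrix (Fin n) (Fin n) ℂ => star v ⬝ᵥ (A *ᵥ v))
          = fun A => ∑ i, ∑ j, star (v i) * (A i j * v j) := by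
        funext A
        simp [dotProduct, Matrix.mulVec, Finset.mul_sum]
      rw [h0]
      exact continuous_finset_sum _ fun i _ => continuous_finset_sum _ fun j _ =>
        continuous_const.mul (((continuous_id.matrix_elem i j)).mul
          continuous_const)
    have hcl : IsClosed {z : ℂ | 0 ≤ z} := by
      have h0 : {z : ℂ | 0 ≤ z} = Complex.re ⁻¹' (Set.Ici 0) ∩ Complex.im ⁻¹' {0} := by
        ext z
        simp [Complex.le_def, eq_comm]
      rw [h0]
      exact (isClosed_Ici.preimage Complex.continuous_re).inter
        (isClosed_singleton.preimage Complex.continuous_im)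
    exact hcl.preimage hc

lemma aux_continuous_trace_mul (g : Matrix (Fin n) (Fin n) ℂ) :
    Continuous fun A : Matrix (Fin n) (Fin n) ℂ => (A * g).trace := by
  have h0 : (fun A : Matrix (Fin n) (Fin n) ℂ => (A * g).trace)
      = fun A => ∑ i, ∑ j, A i j * g j i := by
    funext A
    simp [Matrix.trace, Matrix.diag, Matrix.mul_apply]
  rw [h0]
  exact continuous_finset_sum _ fun i _ => continuous_finset_sum _ fun j _ =>
    ((continuous_id.matrix_elem i j)).mul continuous_const

lemma aux_compact_of_closed_bounded (S : Set (Matrix (Fin n) (Fin n) ℂ)) (hc : IsClosed S)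
    (C : ℝ) (hb : ∀ A ∈ S, ∀ i j, ‖A i j‖ ≤ C) : IsCompact S := by
  have : ProperSpace (Matrix (Fin n) (Fin n) ℂ) := FiniteDimensional.proper ℝ _
  refine Metric.isCompact_of_isClosed_isBounded hc ?_
  rw [isBounded_iff_forall_norm_le]
  refine ⟨max C 0, fun A hA => ?_⟩
  rw [Matrix.norm_le_iff (le_max_right _ _)]
  exact fun i j => (hb A hA i j).trans (le_max_left _ _)

lemma aux_submodule_closed (L : Submodule ℝ (Matrix (Fin n) (Fin n) ℂ)) :
    IsClosed (L : Set (Matrix (Fin n) (Fin n) ℂ)) :=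
  Submodule.closed_of_finiteDimensional L

end Aux

/-- `O_B = {x : ∃ b ∈ B, -b ≤ x ≤ b}` and `O_B ∩ span(B)` is the unit ball of the base norm
on `span(B)`. -/
theorem stmt10 (B : Set (Matrix (Fin n) (Fin n) ℂ)) (hB : IsFaithfulSection B) :
    OB B = {x | ∃ b ∈ B, (b - x).PosSemidef ∧ (b + x).PosSemidef} ∧
    OB B ∩ (Submodule.span ℝ B : Submodule ℝ (Matrix (Fin n) (Fin n) ℂ)) =
      {x | x ∈ Submodule.span ℝ B ∧ baseNormM B x ≤ 1} := by
  obtain ⟨⟨L, g, hg, hBeq⟩, b₀, hb₀B, hb₀pos⟩ := hB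
  have hBsub : B ⊆ (L : Set (Matrix (Fin n) (Fin n) ℂ)) := by
    rw [hBeq]; exact Set.inter_subset_left
  have hBps : ∀ b ∈ B, Matrix.PosSemidef b := fun b hb => by
    rw [hBeq] at hb; exact hb.2.1
  have hBtr : ∀ b ∈ B, (b * g).trace = 1 := fun b hb => by
    rw [hBeq] at hb; exact hb.2.2
  have hBmem : ∀ c : Matrix (Fin n) (Fin n) ℂ,
      c ∈ L → c.PosSemidef → (c * g).trace = 1 → c ∈ B := by
    intro c h1 h2 h3; rw [hBeq]; exact ⟨h1, h2, h3⟩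
  have hn : 0 < n := by
    rcases Nat.eq_zero_or_pos n with h0 | h
    · exfalso
      have h1 := hBtr b₀ hb₀B
      subst h0
      have h2 : (b₀ * g).trace = 0 := Matrix.trace_eq_zero_of_isEmpty _
      rw [h2] at h1
      exact zero_ne_one h1
    · exact h
  -- Part 1
  have hchar : OB B = {x | ∃ b ∈ B, (b - x).PosSemidef ∧ (b + x).PosSemidef} := by
    ext x
    constructor
    · rintro ⟨x₁, x₂, h1, h2, h3, rfl⟩
      refine ⟨x₁ + x₂, h3, ?_, ?_⟩
      · have he : x₁ + x₂ - (x₁ - x₂) = x₂ + x₂ := by abel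
        rw [he]; exact h2.add h2
      · have he : x₁ + x₂ + (x₁ - x₂) = x₁ + x₁ := by abel
        rw [he]; exact h1.add h1
    · rintro ⟨b, hb, h1, h2⟩
      refine ⟨(2⁻¹ : ℝ) • (b + x), (2⁻¹ : ℝ) • (b - x), aux_psd_smul h2 (by norm_num),
        aux_psd_smul h1 (by norm_num), ?_, ?_⟩
      · have he : (2⁻¹ : ℝ) • (b + x) + (2⁻¹ : ℝ) • (b - x) = b := by
          rw [← smul_add]
          have h3 : b + x + (b - x) = (2 : ℝ) • b := by rw [two_smul]; abel
          rw [h3, smul_smul]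
          norm_num
        rw [he]; exact hb
      · rw [← smul_sub]
        have h3 : b + x - (b - x) = (2 : ℝ) • x := by rw [two_smul]; abel
        rw [h3, smul_smul]
        norm_num
  have hJL : Submodule.span ℝ B ≤ L := Submodule.span_le.mpr hBsub
  -- convex-cone combination
  have hcone : ∀ (s t : ℝ) (b₁ b₂ : Matrix (Fin n) (Fin n) ℂ), 0 ≤ s → 0 ≤ t → b₁ ∈ B →
      b₂ ∈ B → ∃ u : ℝ, 0 ≤ u ∧ ∃ b ∈ B, s • b₁ + t • b₂ = u • b := by
    intro s t b₁ b₂ hs ht h1 h2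
    rcases eq_or_lt_of_le (add_nonneg hs ht) with h0 | h0
    · have hs0 : s = 0 := by linarith
      have ht0 : t = 0 := by linarith
      exact ⟨0, le_refl _, b₀, hb₀B, by simp [hs0, ht0]⟩
    · have hu : s + t ≠ 0 := ne_of_gt h0
      refine ⟨s + t, le_of_lt h0, ((s + t)⁻¹ * s) • b₁ + ((s + t)⁻¹ * t) • b₂, ?_, ?_⟩
      · apply hBmem
        · exact L.add_mem (L.smul_mem _ (hBsub h1)) (L.smul_mem _ (hBsub h2))
        · exact (aux_psd_smul (hBps _ h1) (by positivity)).add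
            (aux_psd_smul (hBps _ h2) (by positivity))
        · rw [Matrix.add_mul, Matrix.trace_add, Matrix.smul_mul, Matrix.smul_mul,
            Matrix.trace_smul, Matrix.trace_smul, hBtr _ h1, hBtr _ h2]
          have he : ((s + t)⁻¹ * s) • (1 : ℂ) + ((s + t)⁻¹ * t) • (1 : ℂ)
              = (((s + t)⁻¹ * s + (s + t)⁻¹ * t : ℝ) : ℂ) := by
            rw [Complex.real_smul, Complex.real_smul]
            push_cast
            ring
          rw [he]
          have h5 : (s + t)⁻¹ * s + (s + t)⁻¹ * t = 1 := by
            field_simp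
          rw [h5]
          norm_num
      · rw [smul_add, smul_smul, smul_smul]
        have e1 : (s + t) * ((s + t)⁻¹ * s) = s := by field_simp
        have e2 : (s + t) * ((s + t)⁻¹ * t) = t := by field_simp
        rw [e1, e2]
  -- every element of the span has a decomposition
  have hdecomp : ∀ y, y ∈ Submodule.span ℝ B → ∃ s t : ℝ, ∃ b₁ ∈ B, ∃ b₂ ∈ B,
      0 ≤ s ∧ 0 ≤ t ∧ y = s • b₁ - t • b₂ := by
    intro y hy
    induction hy using Submodule.span_induction with
    | mem z hz => exact ⟨1, 0, z, hz, b₀, hb₀B, zero_le_one, le_refl 0, by simp⟩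
    | zero => exact ⟨0, 0, b₀, hb₀B, b₀, hb₀B, le_refl 0, le_refl 0, by simp⟩
    | add z w hz hw ihz ihw =>
        obtain ⟨s, t, b₁, h1, b₂, h2, hs, ht, hzeq⟩ := ihz
        obtain ⟨s', t', b₁', h1', b₂', h2', hs', ht', hweq⟩ := ihw
        obtain ⟨u, hu, b, hb, hbeq⟩ := hcone s s' b₁ b₁' hs hs' h1 h1'
        obtain ⟨v, hv, b', hb', hbeq'⟩ := hcone t t' b₂ b₂' ht ht' h2 h2'
        refine ⟨u, v, b, hb, b', hb', hu, hv, ?_⟩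
        rw [hzeq, hweq, ← hbeq, ← hbeq']
        abel
    | smul a z hz ihz =>
        obtain ⟨s, t, b₁, h1, b₂, h2, hs, ht, hzeq⟩ := ihz
        rcases le_or_gt 0 a with ha | ha
        · refine ⟨a * s, a * t, b₁, h1, b₂, h2, mul_nonneg ha hs, mul_nonneg ha ht, ?_⟩
          rw [hzeq, smul_sub, smul_smul, smul_smul]
        · refine ⟨(-a) * t, (-a) * s, b₂, h2, b₁, h1, mul_nonneg (by linarith) ht,
            mul_nonneg (by linarith) hs, ?_⟩
          rw [hzeq, smul_sub, smul_smul, smul_smul, neg_mul, neg_mul, neg_smul, neg_smul]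
          abel
  -- forward inclusion of part 2
  have hforward : ∀ x, x ∈ OB B → x ∈ Submodule.span ℝ B → baseNormM B x ≤ 1 := by
    intro x hxOB hxJ
    obtain ⟨x₁, x₂, hx₁, hx₂, hcB, hxeq⟩ := hxOB
    have hxL : x ∈ L := hJL hxJ
    have hcL : (x₁ + x₂) ∈ L := hBsub hcB
    have hx₁e : (2⁻¹ : ℝ) • (x₁ + x₂ + x) = x₁ := by
      rw [hxeq]
      have he : x₁ + x₂ + (x₁ - x₂) = (2 : ℝ) • x₁ := by rw [two_smul]; abel
      rw [he, smul_smul]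
      norm_num
    have hx₂e : (2⁻¹ : ℝ) • (x₁ + x₂ - x) = x₂ := by
      rw [hxeq]
      have he : x₁ + x₂ - (x₁ - x₂) = (2 : ℝ) • x₂ := by rw [two_smul]; abel
      rw [he, smul_smul]
      norm_num
    have hx₁L : x₁ ∈ L := hx₁e ▸ L.smul_mem _ (L.add_mem hcL hxL)
    have hx₂L : x₂ ∈ L := hx₂e ▸ L.smul_mem _ (L.sub_mem hcL hxL)
    obtain ⟨hs'eq, hs'⟩ := aux_nonneg_c _ (aux_trace_psd_mul_nonneg hx₁ hg.posSemidef)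
    obtain ⟨ht'eq, ht'⟩ := aux_nonneg_c _ (aux_trace_psd_mul_nonneg hx₂ hg.posSemidef)
    have hst : ((x₁ * g).trace).re + ((x₂ * g).trace).re = 1 := by
      have h1 := hBtr _ hcB
      rw [Matrix.add_mul, Matrix.trace_add] at h1
      have h2 := congrArg Complex.re h1
      simpa using h2
    have hbdd : BddBelow {r | ∃ s t : ℝ, ∃ b₁ ∈ B, ∃ b₂ ∈ B,
        0 ≤ s ∧ 0 ≤ t ∧ x = s • b₁ - t • b₂ ∧ r = s + t} := by
      refine ⟨0, fun r hr => ?_⟩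
      obtain ⟨s, t, b₁, _, b₂, _, hs, ht, _, hr'⟩ := hr
      rw [hr']
      exact add_nonneg hs ht
    have hmem1 : (1 : ℝ) ∈ {r | ∃ s t : ℝ, ∃ b₁ ∈ B, ∃ b₂ ∈ B,
        0 ≤ s ∧ 0 ≤ t ∧ x = s • b₁ - t • b₂ ∧ r = s + t} := by
      by_cases hs0 : ((x₁ * g).trace).re = 0
      · have hx₁0 : x₁ = 0 := aux_psd_trace_mul_posdef_zero hx₁ hg (by
          rw [hs'eq, hs0]; simp)
        refine ⟨0, 1, b₀, hb₀B, x₁ + x₂, hcB, le_refl 0, zero_le_one, ?_, by ring⟩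
        rw [hxeq, hx₁0]
        simp
      · by_cases ht0 : ((x₂ * g).trace).re = 0
        · have hx₂0 : x₂ = 0 := aux_psd_trace_mul_posdef_zero hx₂ hg (by
            rw [ht'eq, ht0]; simp)
          refine ⟨1, 0, x₁ + x₂, hcB, b₀, hb₀B, zero_le_one, le_refl 0, ?_, by ring⟩
          rw [hxeq, hx₂0]
          simp
        · have hsp : 0 < ((x₁ * g).trace).re := lt_of_le_of_ne hs' (Ne.symm hs0)
          have htp : 0 < ((x₂ * g).trace).re := lt_of_le_of_ne ht' (Ne.symm ht0)
          refine ⟨((x₁ * g).trace).re, ((x₂ * g).trace).re,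
            (((x₁ * g).trace).re)⁻¹ • x₁, ?_, (((x₂ * g).trace).re)⁻¹ • x₂, ?_,
            le_of_lt hsp, le_of_lt htp, ?_, hst.symm⟩
          · apply hBmem
            · exact L.smul_mem _ hx₁L
            · exact aux_psd_smul hx₁ (inv_nonneg.2 hs')
            · rw [Matrix.smul_mul, Matrix.trace_smul, hs'eq]
              simp only [Complex.ofReal_re]
              rw [Complex.real_smul, ← Complex.ofReal_mul, inv_mul_cancel₀ (ne_of_gt hsp)]
              norm_num
          · apply hBmem
            · exact L.smul_mem _ hx₂L
            · exact aux_psd_smul hx₂ (inv_nonneg.2 ht')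
            · rw [Matrix.smul_mul, Matrix.trace_smul, ht'eq]
              simp only [Complex.ofReal_re]
              rw [Complex.real_smul, ← Complex.ofReal_mul, inv_mul_cancel₀ (ne_of_gt htp)]
              norm_num
          · rw [hxeq, smul_smul, smul_smul, mul_inv_cancel₀ (ne_of_gt hsp),
              mul_inv_cancel₀ (ne_of_gt htp), one_smul, one_smul]
    exact csInf_le hbdd hmem1
  -- reverse inclusion of part 2
  have hreverse : ∀ x, x ∈ Submodule.span ℝ B → baseNormM B x ≤ 1 → x ∈ OB B := by
    intro x hxJ hxn
    have hRne : Set.Nonempty {r | ∃ s t : ℝ, ∃ b₁ ∈ B, ∃ b₂ ∈ B,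
        0 ≤ s ∧ 0 ≤ t ∧ x = s • b₁ - t • b₂ ∧ r = s + t} := by
      obtain ⟨s, t, b₁, h1, b₂, h2, hs, ht, heq⟩ := hdecomp x hxJ
      exact ⟨s + t, s, t, b₁, h1, b₂, h2, hs, ht, heq, rfl⟩
    have hsinf : sInf {r | ∃ s t : ℝ, ∃ b₁ ∈ B, ∃ b₂ ∈ B,
        0 ≤ s ∧ 0 ≤ t ∧ x = s • b₁ - t • b₂ ∧ r = s + t} ≤ 1 := hxn
    have hcand : ∀ ε : ℝ, 0 < ε → ∃ c : Matrix (Fin n) (Fin n) ℂ, c ∈ L ∧ c.PosSemidef ∧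
        (c - x).PosSemidef ∧ (c + x).PosSemidef ∧ ((c * g).trace).re < 1 + ε := by
      intro ε hε
      obtain ⟨r, hrR, hrlt⟩ := Real.lt_sInf_add_pos hRne hε
      obtain ⟨s, t, b₁, h1, b₂, h2, hs, ht, heq, hreq⟩ := hrR
      refine ⟨s • b₁ + t • b₂, ?_, ?_, ?_, ?_, ?_⟩
      · exact L.add_mem (L.smul_mem _ (hBsub h1)) (L.smul_mem _ (hBsub h2))
      · exact (aux_psd_smul (hBps _ h1) hs).add (aux_psd_smul (hBps _ h2) ht)
      · have he : s • b₁ + t • b₂ - x = t • b₂ + t • b₂ := by rw [heq]; abel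
        rw [he]
        exact (aux_psd_smul (hBps _ h2) ht).add (aux_psd_smul (hBps _ h2) ht)
      · have he : s • b₁ + t • b₂ + x = s • b₁ + s • b₁ := by rw [heq]; abel
        rw [he]
        exact (aux_psd_smul (hBps _ h1) hs).add (aux_psd_smul (hBps _ h1) hs)
      · have htr : ((s • b₁ + t • b₂) * g).trace = ((s + t : ℝ) : ℂ) := by
          rw [Matrix.add_mul, Matrix.trace_add, Matrix.smul_mul, Matrix.smul_mul,
            Matrix.trace_smul, Matrix.trace_smul, hBtr _ h1, hBtr _ h2,
            Complex.real_smul, Complex.real_smul]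
          push_cast
          ring
        rw [htr, Complex.ofReal_re, ← hreq]
        linarith
    obtain ⟨ε₀, hε₀, hgap⟩ := aux_posdef_gap hg hn
    set K' : Set (Matrix (Fin n) (Fin n) ℂ) := {c | c ∈ L ∧ c.PosSemidef ∧
      (c - x).PosSemidef ∧ (c + x).PosSemidef ∧ ((c * g).trace).re ≤ 2} with hK'def
    have hK'closed : IsClosed K' := by
      have h1 : K' = (L : Set (Matrix (Fin n) (Fin n) ℂ)) ∩
          ({A | A.PosSemidef} ∩ (((fun c => c - x) ⁻¹' {A | A.PosSemidef}) ∩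
            (((fun c => c + x) ⁻¹' {A | A.PosSemidef}) ∩
              ((fun c : Matrix (Fin n) (Fin n) ℂ => ((c * g).trace).re) ⁻¹' Set.Iic 2)))) := by
        rw [hK'def]
        ext c
        simp only [Set.mem_setOf_eq, Set.mem_inter_iff, Set.mem_preimage, Set.mem_Iic,
          SetLike.mem_coe]
      rw [h1]
      refine (aux_submodule_closed L).inter (aux_isClosed_psd.inter
        ((aux_isClosed_psd.preimage (continuous_id.sub continuous_const)).inter
          ((aux_isClosed_psd.preimage (continuous_id.add continuous_const)).inter
            (isClosed_Iic.preimage (Complex.continuous_re.comp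
              (aux_continuous_trace_mul g))))))
    have hbd : ∀ c ∈ K', ∀ i j, ‖c i j‖ ≤ 2 / ε₀ := by
      intro c hc i j
      obtain ⟨hcL, hcP, _, _, hctr⟩ := hc
      have h1 : 0 ≤ ((c * (g - (ε₀ : ℂ) • 1)).trace).re := by
        have h0 := aux_trace_psd_mul_nonneg hcP hgap
        rw [Complex.le_def] at h0
        simpa using h0.1
      have h2 : (c * (g - (ε₀ : ℂ) • 1)).trace = (c * g).trace - (ε₀ : ℂ) * c.trace := by
        rw [Matrix.mul_sub, Matrix.mul_smul, Matrix.mul_one, Matrix.trace_sub,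
          Matrix.trace_smul]
        rw [smul_eq_mul]
      have h3 : ε₀ * c.trace.re ≤ ((c * g).trace).re := by
        rw [h2] at h1
        rw [Complex.sub_re] at h1
        have h4 : ((ε₀ : ℂ) * c.trace).re = ε₀ * c.trace.re := by simp
        linarith
      have h5 : c.trace.re ≤ 2 / ε₀ := by
        rw [le_div_iff₀ hε₀, mul_comm]
        linarith
      exact (aux_psd_entry_bound hcP i j).trans h5
    have hK'cpt : IsCompact K' := aux_compact_of_closed_bounded _ hK'closed _ hbd
    have hK'ne : K'.Nonempty := by
      obtain ⟨c, hcL, hcP, hc1, hc2, hlt⟩ := hcand 1 one_pos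
      exact ⟨c, hcL, hcP, hc1, hc2, by linarith⟩
    obtain ⟨c, hcK, hcmin⟩ := hK'cpt.exists_isMinOn hK'ne
      ((Complex.continuous_re.comp (aux_continuous_trace_mul g)).continuousOn)
    obtain ⟨hcL, hcP, hcmx, hcpx, hctr2⟩ := hcK
    have hfc1 : ((c * g).trace).re ≤ 1 := by
      refine le_of_forall_pos_le_add fun ε hε => ?_
      obtain ⟨c', h1, h2, h3, h4, hlt⟩ := hcand (min ε 1) (lt_min hε one_pos)
      have hc'K : c' ∈ K' := by
        refine ⟨h1, h2, h3, h4, ?_⟩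
        have h6 := min_le_right ε 1
        linarith
      have h7 : ((c * g).trace).re ≤ ((c' * g).trace).re := hcmin hc'K
      have h8 := min_le_left ε 1
      linarith
    have hctrc : (c * g).trace = ((((c * g).trace).re : ℝ) : ℂ) :=
      (aux_nonneg_c _ (aux_trace_psd_mul_nonneg hcP hg.posSemidef)).1
    have hu0 : 0 ≤ 1 - ((c * g).trace).re := by linarith
    have hbB : c + (1 - ((c * g).trace).re) • b₀ ∈ B := by
      apply hBmem
      · exact L.add_mem hcL (L.smul_mem _ (hBsub hb₀B))
      · exact hcP.add (aux_psd_smul (hBps _ hb₀B) hu0)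
      · rw [Matrix.add_mul, Matrix.trace_add, Matrix.smul_mul, Matrix.trace_smul,
          hBtr _ hb₀B]
        rw [hctrc, Complex.real_smul]
        push_cast
        simp
    rw [hchar]
    refine ⟨c + (1 - ((c * g).trace).re) • b₀, hbB, ?_, ?_⟩
    · have he : c + (1 - ((c * g).trace).re) • b₀ - x
          = (c - x) + (1 - ((c * g).trace).re) • b₀ := by abel
      rw [he]
      exact hcmx.add (aux_psd_smul (hBps _ hb₀B) hu0)
    · have he : c + (1 - ((c * g).trace).re) • b₀ + x
          = (c + x) + (1 - ((c * g).trace).re) • b₀ := by abel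
      rw [he]
      exact hcpx.add (aux_psd_smul (hBps _ hb₀B) hu0)
  refine ⟨hchar, ?_⟩
  ext x
  constructor
  · rintro ⟨hxOB, hxJ⟩
    exact ⟨hxJ, hforward x hxOB hxJ⟩
  · rintro ⟨hxJ, hxn⟩
    exact ⟨hreverse x hxJ hxn, hxJ⟩
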